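/- Let A and B be positive semi-definite operators on a finite-dimensional Hilbert space. Then the infimum over operators T with 0 ≤ T ≤ I of Tr{(I−T)A} + Tr{TB} equals (1/2)(Tr{A+B} − ‖A−B‖₁), and this infimum is achieved by the positive spectral projection T = {A − B ≥ 0}. -/

import Mathlib

open Matrix BigOperators Kronecker
open scoped Classical ComplexOrder

variable {d : Type*} [Fintype d] [DecidableEq d]

/-- Trace norm of a matrix. -/
noncomputable def traceNorm (A : Matrix d d ℂ) : ℝ :=
  (((Matrix.posSemidef_conjTranspose_mul_self A).1.eigenvectorUnitary : Matrix d d ℂ) *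
      Matrix.diagonal (fun i => ((Real.sqrt
        ((Matrix.posSemidef_conjTranspose_mul_self A).1.eigenvalues i) : ℝ) : ℂ)) *
      (star (Matrix.posSemidef_conjTranspose_mul_self A).1.eigenvectorUnitary :
        Matrix d d ℂ)).trace.re

/-- Spectral functional calculus for a Hermitian matrix. -/
noncomputable def specFun {A : Matrix d d ℂ} (hA : A.IsHermitian) (f : ℝ → ℝ) :
    Matrix d d ℂ :=
  (hA.eigenvectorUnitary : Matrix d d ℂ) *
    Matrix.diagonal (fun i => (f (hA.eigenvalues i) : ℂ)) *
    star (hA.eigenvectorUnitary : Matrix d d ℂ)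

/-- Matrix power via functional calculus, with the convention `0 ^ s = 0` on kernels.
For `s = -1/2` this gives the square root of the Moore–Penrose inverse. -/
noncomputable def mpow (A : Matrix d d ℂ) (s : ℝ) : Matrix d d ℂ :=
  if hA : A.PosSemidef then
    specFun hA.1 (fun t => if t = 0 then 0 else t ^ s)
  else 0

/-- Base-2 matrix logarithm via functional calculus, `log 0 := 0` on kernels. -/
noncomputable def mlog (A : Matrix d d ℂ) : Matrix d d ℂ :=
  if hA : A.PosSemidef then
    specFun hA.1 (fun t => if t = 0 then 0 else Real.logb 2 t)
  else 0

/-- Positive spectral projection `{X ≥ 0}` of a Hermitian matrix. -/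
noncomputable def posProj {A : Matrix d d ℂ} (hA : A.IsHermitian) : Matrix d d ℂ :=
  specFun hA (fun t => if 0 ≤ t then 1 else 0)

/-- A density operator: positive semi-definite with unit trace. -/
def IsDensity (ρ : Matrix d d ℂ) : Prop := ρ.PosSemidef ∧ ρ.trace = 1

/-- A measurement operator: `0 ≤ Λ ≤ I`. -/
def IsMeasOp (Λ : Matrix d d ℂ) : Prop := Λ.PosSemidef ∧ (1 - Λ).PosSemidef

/-- `n`-fold tensor power of a matrix. -/
def tpow (ρ : Matrix d d ℂ) (n : ℕ) : Matrix (Fin n → d) (Fin n → d) ℂ :=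
  Matrix.of fun x y => ∏ i, ρ (x i) (y i)

/-- Partial trace over the right (second) tensor factor. -/
noncomputable def ptraceR {a b : Type*} [Fintype a] [Fintype b]
    (ρ : Matrix (a × b) (a × b) ℂ) : Matrix a a ℂ :=
  Matrix.of fun i j => ∑ k, ρ (i, k) (j, k)

/-- Partial trace over the left (first) tensor factor. -/
noncomputable def ptraceL {a b : Type*} [Fintype a] [Fintype b]
    (ρ : Matrix (a × b) (a × b) ℂ) : Matrix b b ℂ :=
  Matrix.of fun i j => ∑ k, ρ (k, i) (k, j)

/-- Quantum relative entropy (base 2), via the `mlog` convention. -/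
noncomputable def qRelEnt (ρ σ : Matrix d d ℂ) : ℝ :=
  ((ρ * (mlog ρ - mlog σ)).trace).re

/-- ε-hypothesis testing relative entropy. -/
noncomputable def DH (ε : ℝ) (ρ σ : Matrix d d ℂ) : ℝ :=
  -Real.logb 2 (sInf {x : ℝ | ∃ Λ : Matrix d d ℂ,
    IsMeasOp Λ ∧ 1 - ε ≤ ((Λ * ρ).trace).re ∧ x = ((Λ * σ).trace).re})

/-- Petz–Rényi relative entropy of order α. -/
noncomputable def DAlpha (α : ℝ) (ρ σ : Matrix d d ℂ) : ℝ :=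
  (1 / (α - 1)) * Real.logb 2 (((mpow ρ α * mpow σ (1 - α)).trace).re)

/-- Shannon entropy (bits) of a probability vector. -/
noncomputable def shannon (p : d → ℝ) : ℝ := -∑ x, p x * Real.logb 2 (p x)

/-- von Neumann entropy (bits). -/
noncomputable def vnEntropy (A : Matrix d d ℂ) : ℝ :=
  if hA : A.IsHermitian then -∑ i, hA.eigenvalues i * Real.logb 2 (hA.eigenvalues i) else 0

/-- Collision (order-2) conditional entropy `H₂(C|S)` of a bipartite state on `s ⊗ c`. -/
noncomputable def H2cond {s c : Type*} [Fintype s] [Fintype c] [DecidableEq s] [DecidableEq c]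
    (ω : Matrix (s × c) (s × c) ℂ) : ℝ :=
  -Real.logb 2 ((ω * (mpow (ptraceR ω) (-(1/2)) ⊗ₖ (1 : Matrix c c ℂ)) *
      ω * (mpow (ptraceR ω) (-(1/2)) ⊗ₖ (1 : Matrix c c ℂ))).trace).re

section helpers
variable {X : Matrix d d ℂ} (hX : X.IsHermitian)

lemma hh_star_mul : (star (hX.eigenvectorUnitary : Matrix d d ℂ)) *
    (hX.eigenvectorUnitary : Matrix d d ℂ) = 1 :=
  Unitary.coe_star_mul_self hX.eigenvectorUnitary

lemma hh_specFun_mul (f g : ℝ → ℝ) :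
    specFun hX f * specFun hX g = specFun hX (fun t => f t * g t) := by
  unfold specFun
  simp only [mul_assoc]
  rw [← mul_assoc (star (hX.eigenvectorUnitary : Matrix d d ℂ))
      (hX.eigenvectorUnitary : Matrix d d ℂ), hh_star_mul hX, one_mul,
    ← mul_assoc (Matrix.diagonal fun i => ((f (hX.eigenvalues i) : ℝ) : ℂ)),
    diagonal_mul_diagonal]
  congr 2
  funext i
  push_cast
  ring

lemma hh_specFun_sub (f g : ℝ → ℝ) :
    specFun hX (fun t => f t - g t) = specFun hX f - specFun hX g := by
  unfold specFun
  have hd : Matrix.diagonal (fun i => (((f (hX.eigenvalues i) - g (hX.eigenvalues i)) : ℝ) : ℂ))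
      = Matrix.diagonal (fun i => ((f (hX.eigenvalues i) : ℝ) : ℂ)) -
        Matrix.diagonal (fun i => ((g (hX.eigenvalues i) : ℝ) : ℂ)) := by
    ext i j
    rcases eq_or_ne i j with rfl | h
    · simp
    · simp [Matrix.diagonal_apply_ne _ h]
  show _ = _
  rw [show (fun t => f t - g t) = fun t => f t - g t from rfl]
  rw [hd, Matrix.mul_sub, Matrix.sub_mul]

lemma hh_specFun_trace (f : ℝ → ℝ) :
    (specFun hX f).trace = ((∑ i, f (hX.eigenvalues i) : ℝ) : ℂ) := by
  unfold specFun
  rw [Matrix.trace_mul_cycle, hh_star_mul hX, one_mul, Matrix.trace_diagonal]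
  push_cast
  rfl

lemma hh_specFun_id : specFun hX (fun t => t) = X := by
  unfold specFun
  conv_rhs => rw [hX.spectral_theorem]
  rfl

lemma hh_specFun_posSemidef {f : ℝ → ℝ} (hf : ∀ t, 0 ≤ f t) :
    (specFun hX f).PosSemidef := by
  unfold specFun
  have hd : (Matrix.diagonal (fun i => (f (hX.eigenvalues i) : ℂ))).PosSemidef :=
    Matrix.posSemidef_diagonal_iff.mpr fun i => by
      rw [Complex.zero_le_real]; exact hf _
  have := hd.mul_mul_conjTranspose_same (hX.eigenvectorUnitary : Matrix d d ℂ)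
  rwa [← Matrix.star_eq_conjTranspose] at this

lemma hh_psd_trace_re_nonneg {M : Matrix d d ℂ} (hM : M.PosSemidef) :
    0 ≤ (M.trace).re := by
  rw [Matrix.trace, Complex.re_sum]
  refine Finset.sum_nonneg fun i _ => ?_
  have := hM.re_dotProduct_nonneg (Pi.single i 1)
  simpa [Matrix.diag, dotProduct, Matrix.mulVec, Pi.single_apply, Finset.mul_sum] using this

lemma hh_trace_mul_re_nonneg {S T : Matrix d d ℂ} (hS : S.PosSemidef) (hT : T.PosSemidef) :
    0 ≤ ((S * T).trace).re := by
  have h1 : S * T = specFun hS.1 (fun t => Real.sqrt (max t 0)) *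
      (specFun hS.1 (fun t => Real.sqrt (max t 0)) * T) := by
    rw [← mul_assoc, hh_specFun_mul hS.1]
    conv_lhs => rw [← hh_specFun_id hS.1]
    unfold specFun
    have hfun : (fun i => ((hS.1.eigenvalues i : ℝ) : ℂ)) = fun i =>
        ((Real.sqrt (max (hS.1.eigenvalues i) 0) * Real.sqrt (max (hS.1.eigenvalues i) 0) : ℝ) : ℂ) := by
      funext i
      rw [Real.mul_self_sqrt (le_max_right _ _), max_eq_left (hS.eigenvalues_nonneg _)]
    rw [hfun]
  rw [h1, Matrix.trace_mul_comm]
  have h2 : ((specFun hS.1 (fun t => Real.sqrt (max t 0)) * T) *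
      specFun hS.1 (fun t => Real.sqrt (max t 0))).PosSemidef := by
    have := hT.conjTranspose_mul_mul_same (specFun hS.1 (fun t => Real.sqrt (max t 0)))
    rwa [(hh_specFun_posSemidef hS.1 (fun t => Real.sqrt_nonneg _)).1, mul_assoc,
      ← mul_assoc] at this
  exact hh_psd_trace_re_nonneg h2

end helpers

section mainhelpers
open scoped MatrixOrder
variable {X : Matrix d d ℂ}

lemma hh_traceNorm_eq (hX : X.IsHermitian) :
    traceNorm X = ∑ i, |hX.eigenvalues i| := by
  have habs : (specFun hX (fun t => |t|)).PosSemidef :=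
    hh_specFun_posSemidef hX (fun t => abs_nonneg t)
  have hsq : (specFun hX (fun t => |t|)) ^ 2 = Xᴴ * X := by
    rw [sq, hh_specFun_mul hX]
    have : (fun t => |t| * |t|) = fun t : ℝ => t * t := by
      funext t; exact abs_mul_abs_self t
    rw [this, ← hh_specFun_mul hX (fun t => t) (fun t => t), hh_specFun_id hX, hX.eq]
  have hsq' : specFun hX (fun t => |t|) * specFun hX (fun t => |t|) = Xᴴ * X := by
    rw [← sq]; exact hsq
  have h1 := (Matrix.posSemidef_conjTranspose_mul_self X).1
  have key : specFun h1 Real.sqrt = specFun hX (fun t => |t|) := by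
    have e1 : specFun h1 Real.sqrt = cfc Real.sqrt (Xᴴ * X) := by
      rw [h1.cfc_eq]
      simp [specFun, Matrix.IsHermitian.cfc, Unitary.conjStarAlgAut_apply, Function.comp_def]
    rw [e1, ← cfcₙ_eq_cfc, ← CFC.sqrt_eq_real_sqrt _
      (Matrix.posSemidef_conjTranspose_mul_self X).nonneg]
    exact CFC.sqrt_unique hsq' habs.nonneg
  show ((specFun h1 Real.sqrt).trace).re = _
  rw [key, hh_specFun_trace hX, Complex.ofReal_re]

end mainhelpers

/-- **Optimal symmetric hypothesis test (Holevo–Helstrom).** For positive semi-definite `A, B`,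
the infimum over tests `0 ≤ T ≤ I` of `Tr{(I-T)A} + Tr{TB}` equals
`(1/2)(Tr{A+B} - ‖A-B‖₁)`, and is achieved by the positive spectral projection `{A - B ≥ 0}`. -/
theorem symmetric_test_optimal (A B : Matrix d d ℂ)
    (hA : A.PosSemidef) (hB : B.PosSemidef) :
    (((1 - posProj (hA.1.sub hB.1)) * A).trace).re +
        ((posProj (hA.1.sub hB.1) * B).trace).re =
      (1 / 2) * (((A + B).trace).re - traceNorm (A - B)) ∧
    ∀ T : Matrix d d ℂ, T.PosSemidef → (1 - T).PosSemidef →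
      (1 / 2) * (((A + B).trace).re - traceNorm (A - B)) ≤
        (((1 - T) * A).trace).re + ((T * B).trace).re := by
  have hX : (A - B).IsHermitian := hA.1.sub hB.1
  set lam := hX.eigenvalues with hlam
  set Sp := ∑ i, max (lam i) 0 with hSp
  -- generic algebra for any test T
  have halg : ∀ T : Matrix d d ℂ,
      (((1 - T) * A).trace).re + ((T * B).trace).re
        = (A.trace).re - ((T * (A - B)).trace).re := by
    intro T
    have h1 : (1 - T) * A = A - T * A := by rw [Matrix.sub_mul, Matrix.one_mul]
    have h2 : T * (A - B) = T * A - T * B := Matrix.mul_sub T A B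
    rw [h1, h2, Matrix.trace_sub, Matrix.trace_sub, Complex.sub_re, Complex.sub_re]
    ring
  -- positive part
  have hPmul : posProj hX * (A - B) = specFun hX (fun t => max t 0) := by
    have step : posProj hX * (A - B)
        = specFun hX (fun t => if 0 ≤ t then 1 else 0) * specFun hX (fun t => t) := by
      rw [hh_specFun_id hX]; rfl
    rw [step, hh_specFun_mul hX]
    refine congrArg (specFun hX) ?_
    funext t
    by_cases h : 0 ≤ t
    · simp [h, max_eq_left h]
    · simp [h, max_eq_right (le_of_not_ge h)]
  have hPtr : ((specFun hX (fun t => max t 0)).trace).re = Sp := by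
    rw [hh_specFun_trace hX, Complex.ofReal_re]
  -- trace identities
  have htrX : ((A - B).trace).re = ∑ i, lam i := by
    have h := hh_specFun_trace hX (fun t => t)
    rw [hh_specFun_id hX] at h
    rw [h, Complex.ofReal_re]
  have htrX' : ((A - B).trace).re = (A.trace).re - (B.trace).re := by
    rw [Matrix.trace_sub, Complex.sub_re]
  have htrAB : (((A + B)).trace).re = (A.trace).re + (B.trace).re := by
    rw [Matrix.trace_add, Complex.add_re]
  have hTN : traceNorm (A - B) = 2 * Sp - ∑ i, lam i := by
    rw [hh_traceNorm_eq hX]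
    have : ∀ i : d, |lam i| = 2 * max (lam i) 0 - lam i := by
      intro i
      rcases le_total 0 (lam i) with h | h
      · rw [abs_of_nonneg h, max_eq_left h]; ring
      · rw [abs_of_nonpos h, max_eq_right h]; ring
    calc (∑ i, |lam i|) = ∑ i, (2 * max (lam i) 0 - lam i) :=
          Finset.sum_congr rfl (fun i _ => this i)
      _ = 2 * Sp - ∑ i, lam i := by
          rw [Finset.sum_sub_distrib, ← Finset.mul_sum]
  constructor
  · have hPX : ((posProj hX * (A - B)).trace).re = Sp := by rw [hPmul, hPtr]
    have := halg (posProj hX)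
    rw [this, hPX, htrAB, hTN]
    have := htrX
    linarith [htrX, htrX']
  · intro T hT hT'
    rw [halg T, htrAB, hTN]
    -- bound: re tr (T (A-B)) ≤ Sp
    have hsplit : A - B = specFun hX (fun t => max t 0) - specFun hX (fun t => max (-t) 0) := by
      rw [← hh_specFun_sub hX]
      have : (fun t : ℝ => max t 0 - max (-t) 0) = fun t : ℝ => t := by
        funext t
        rcases le_total 0 t with h | h
        · rw [max_eq_left h, max_eq_right (by linarith : -t ≤ 0)]; ring
        · rw [max_eq_right h, max_eq_left (by linarith : 0 ≤ -t)]; ring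
      rw [this, hh_specFun_id hX]
    have hppsd : (specFun hX (fun t => max t 0)).PosSemidef :=
      hh_specFun_posSemidef hX (fun t => le_max_right t 0)
    have hmpsd : (specFun hX (fun t => max (-t) 0)).PosSemidef :=
      hh_specFun_posSemidef hX (fun t => le_max_right (-t) 0)
    have hb1 : 0 ≤ ((T * specFun hX (fun t => max (-t) 0)).trace).re :=
      hh_trace_mul_re_nonneg hT hmpsd
    have hb2 : ((T * specFun hX (fun t => max t 0)).trace).re ≤ Sp := by
      have h0 : 0 ≤ (((1 - T) * specFun hX (fun t => max t 0)).trace).re :=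
        hh_trace_mul_re_nonneg hT' hppsd
      have he : (1 - T) * specFun hX (fun t => max t 0)
          = specFun hX (fun t => max t 0) - T * specFun hX (fun t => max t 0) := by
        rw [Matrix.sub_mul, Matrix.one_mul]
      rw [he, Matrix.trace_sub, Complex.sub_re, hPtr] at h0
      linarith
    have hTX : ((T * (A - B)).trace).re
        = ((T * specFun hX (fun t => max t 0)).trace).re
          - ((T * specFun hX (fun t => max (-t) 0)).trace).re := by
      conv_lhs => rw [hsplit]
      rw [Matrix.mul_sub, Matrix.trace_sub, Complex.sub_re]
    rw [hTX]
    linarith [htrX, htrX']
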